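/- Assume moreover the normalization Σ_n c_n = D_v/(4 r_T² k_f), and let f_c(t) = f_{c,1}(t) for 0 < t ≤ τ and f_c(t) = f_{c,2}(t) for t > τ. Then the asymptotic fraction of absorbed molecules satisfies lim_{t→∞} ∫₀^t f_c(u) H(t − u) du = H_∞ = w/√(D_σ k_d) − (w γ²/ζ) √(D_σ/k_d) + w γ/ζ. (Corollary 1.) -/

import Mathlib

open MeasureTheory Filter Topology
open scoped ENNReal NNReal

noncomputable def erf (x : ℝ) : ℝ := (2 / Real.sqrt Real.pi) * ∫ u in (0:ℝ)..x, Real.exp (-u ^ 2)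

noncomputable def erfc (x : ℝ) : ℝ := 1 - erf x




lemma gauss_integrable : MeasureTheory.Integrable (fun u : ℝ => Real.exp (-u ^ 2)) := by
  have := integrable_exp_neg_mul_sq (b := 1) one_pos
  simpa using this

lemma gauss_Ioi : ∫ u in Set.Ioi (0:ℝ), Real.exp (-u ^ 2) = Real.sqrt Real.pi / 2 := by
  have := integral_gaussian_Ioi 1
  simpa using this

lemma sqrt_pi_pos : 0 < Real.sqrt Real.pi := Real.sqrt_pos.2 Real.pi_pos

lemma erf_le_one (x : ℝ) : erf x ≤ 1 := by
  rcases le_or_gt x 0 with hx | hx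
  · have h1 : erf x ≤ 0 := by
      have : (∫ u in x..(0:ℝ), Real.exp (-u ^ 2)) ≥ 0 := by
        apply intervalIntegral.integral_nonneg hx
        intro u _; positivity
      have h2 : (∫ u in (0:ℝ)..x, Real.exp (-u ^ 2)) ≤ 0 := by
        rw [intervalIntegral.integral_symm]; linarith
      unfold erf
      apply mul_nonpos_of_nonneg_of_nonpos _ h2
      positivity
    linarith
  · have h2 : (∫ u in (0:ℝ)..x, Real.exp (-u ^ 2)) ≤ Real.sqrt Real.pi / 2 := by
      rw [intervalIntegral.integral_of_le hx.le, ← gauss_Ioi]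
      apply setIntegral_mono_set gauss_integrable.integrableOn
      · filter_upwards with u; positivity
      · filter_upwards with u; intro hu; exact hu.1
    unfold erf
    rw [show (1:ℝ) = (2 / Real.sqrt Real.pi) * (Real.sqrt Real.pi / 2) by
      field_simp]
    apply mul_le_mul_of_nonneg_left h2
    positivity

lemma erf_nonneg {x : ℝ} (hx : 0 ≤ x) : 0 ≤ erf x := by
  unfold erf
  apply mul_nonneg (by positivity)
  apply intervalIntegral.integral_nonneg hx
  intro u _; positivity

lemma erf_tendsto : Tendsto erf atTop (𝓝 1) := by
  have h := intervalIntegral_tendsto_integral_Ioi 0 gauss_integrable.integrableOn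
    (tendsto_id (α := ℝ))
  rw [gauss_Ioi] at h
  have := h.const_mul (2 / Real.sqrt Real.pi)
  have heq : 2 / Real.sqrt Real.pi * (Real.sqrt Real.pi / 2) = 1 := by field_simp
  rw [heq] at this
  exact this


lemma shifted_gauss (x : ℝ) :
    ∫ u in Set.Ioi x, Real.exp (-(u - x) ^ 2) = Real.sqrt Real.pi / 2 := by
  rw [← integral_indicator measurableSet_Ioi]
  have heq : (fun u => Set.indicator (Set.Ioi x) (fun u => Real.exp (-(u - x) ^ 2)) u)
      = fun u => Set.indicator (Set.Ioi 0) (fun v => Real.exp (-v ^ 2)) (u - x) := by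
    funext u
    by_cases h : x < u
    · simp [Set.indicator_apply, Set.mem_Ioi, h, sub_pos]
    · simp [Set.indicator_apply, Set.mem_Ioi, h, sub_pos]
  rw [heq, integral_sub_right_eq_self (fun u => Set.indicator (Set.Ioi (0:ℝ))
    (fun v => Real.exp (-v ^ 2)) u) x, integral_indicator measurableSet_Ioi, gauss_Ioi]

lemma erfc_eq (x : ℝ) (hx : 0 ≤ x) :
    erfc x = (2 / Real.sqrt Real.pi) * ∫ u in Set.Ioi x, Real.exp (-u ^ 2) := by
  have hsplit : (∫ u in Set.Ioc 0 x, Real.exp (-u ^ 2)) + ∫ u in Set.Ioi x, Real.exp (-u ^ 2)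
      = Real.sqrt Real.pi / 2 := by
    rw [← gauss_Ioi, ← setIntegral_union (Set.Ioc_disjoint_Ioi le_rfl) measurableSet_Ioi
      gauss_integrable.integrableOn gauss_integrable.integrableOn,
      Set.Ioc_union_Ioi_eq_Ioi hx]
  have hpi := Real.sqrt_pos.2 Real.pi_pos
  unfold erfc erf
  rw [intervalIntegral.integral_of_le hx]
  have : (∫ u in Set.Ioc 0 x, Real.exp (-u ^ 2)) =
      Real.sqrt Real.pi / 2 - ∫ u in Set.Ioi x, Real.exp (-u ^ 2) := by linarith
  rw [this]
  field_simp
  ring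

lemma erfc_le_gauss (x : ℝ) (hx : 0 ≤ x) : erfc x ≤ Real.exp (-x ^ 2) := by
  have hpi := Real.sqrt_pos.2 Real.pi_pos
  rw [erfc_eq x hx]
  have hb : (∫ u in Set.Ioi x, Real.exp (-u ^ 2))
      ≤ ∫ u in Set.Ioi x, Real.exp (-x ^ 2) * Real.exp (-(u - x) ^ 2) := by
    apply setIntegral_mono_on gauss_integrable.integrableOn
    · exact ((gauss_integrable.comp_sub_right x).const_mul _).integrableOn
    · exact measurableSet_Ioi
    · intro u hu
      rw [← Real.exp_add]
      apply Real.exp_le_exp.2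
      have : x ≤ u := le_of_lt hu
      nlinarith
  have hc : (∫ u in Set.Ioi x, Real.exp (-x ^ 2) * Real.exp (-(u - x) ^ 2))
      = Real.exp (-x ^ 2) * (Real.sqrt Real.pi / 2) := by
    rw [integral_const_mul, shifted_gauss]
  calc 2 / Real.sqrt Real.pi * ∫ u in Set.Ioi x, Real.exp (-u ^ 2)
      ≤ 2 / Real.sqrt Real.pi * (Real.exp (-x ^ 2) * (Real.sqrt Real.pi / 2)) := by
        apply mul_le_mul_of_nonneg_left _ (by positivity); rw [← hc]; exact hb
    _ = Real.exp (-x ^ 2) := by field_simp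


@[continuity, fun_prop]
lemma erf_continuous : Continuous erf := by
  unfold erf
  exact continuous_const.mul (intervalIntegral.continuous_primitive
    (fun a b => gauss_integrable.intervalIntegrable) 0)

lemma sqrt_tendsto_atTop : Tendsto Real.sqrt atTop atTop := by
  apply tendsto_atTop_atTop.2
  intro b
  refine ⟨b ^ 2, fun x hx => ?_⟩
  calc b ≤ |b| := le_abs_self b
    _ = Real.sqrt (b ^ 2) := (Real.sqrt_sq_eq_abs b).symm
    _ ≤ Real.sqrt x := Real.sqrt_le_sqrt hx

section Hlem
variable (Dσ kd γ w ζ : ℝ)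

noncomputable def Hform (t : ℝ) : ℝ :=
  w / Real.sqrt (kd * Dσ) * erf (Real.sqrt (kd * t)) -
    w * γ / ζ * (Real.exp (ζ * t) * erfc (γ * Real.sqrt (Dσ * t)) +
      γ * Real.sqrt (Dσ / kd) * erf (Real.sqrt (kd * t)) - 1)

lemma Hform_continuous : Continuous (Hform Dσ kd γ w ζ) := by
  unfold Hform erfc
  fun_prop

lemma middle_term_bounds (hDσ : 0 < Dσ) (hkd : 0 < kd) (hγ : 0 < γ)
    (hζdef : ζ = γ ^ 2 * Dσ - kd) {t : ℝ} (ht : 0 < t) :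
    0 ≤ Real.exp (ζ * t) * erfc (γ * Real.sqrt (Dσ * t)) ∧
      Real.exp (ζ * t) * erfc (γ * Real.sqrt (Dσ * t)) ≤ Real.exp (-(kd * t)) := by
  have harg : 0 ≤ γ * Real.sqrt (Dσ * t) := by positivity
  constructor
  · apply mul_nonneg (Real.exp_nonneg _)
    have := erf_le_one (γ * Real.sqrt (Dσ * t))
    unfold erfc; linarith
  · calc Real.exp (ζ * t) * erfc (γ * Real.sqrt (Dσ * t))
        ≤ Real.exp (ζ * t) * Real.exp (-(γ * Real.sqrt (Dσ * t)) ^ 2) := by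
          apply mul_le_mul_of_nonneg_left (erfc_le_gauss _ harg) (Real.exp_nonneg _)
      _ = Real.exp (-(kd * t)) := by
          rw [← Real.exp_add]
          congr 1
          rw [mul_pow, Real.sq_sqrt (by positivity)]
          rw [hζdef]; ring

lemma Hform_tendsto (hDσ : 0 < Dσ) (hkd : 0 < kd) (hγ : 0 < γ)
    (hζdef : ζ = γ ^ 2 * Dσ - kd) :
    Tendsto (Hform Dσ kd γ w ζ) atTop
      (𝓝 (w / Real.sqrt (Dσ * kd) - w * γ ^ 2 / ζ * Real.sqrt (Dσ / kd) + w * γ / ζ)) := by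
  have h1 : Tendsto (fun t => erf (Real.sqrt (kd * t))) atTop (𝓝 1) := by
    apply erf_tendsto.comp
    exact sqrt_tendsto_atTop.comp (tendsto_id.const_mul_atTop hkd)
  have hh : Tendsto (fun t => Real.exp (-(kd * t))) atTop (𝓝 0) :=
    Real.tendsto_exp_atBot.comp (tendsto_neg_atTop_atBot.comp (tendsto_id.const_mul_atTop hkd))
  have h2 : Tendsto (fun t => Real.exp (ζ * t) * erfc (γ * Real.sqrt (Dσ * t))) atTop (𝓝 0) := by
    refine tendsto_of_tendsto_of_tendsto_of_le_of_le' tendsto_const_nhds hh ?_ ?_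
    · filter_upwards [eventually_gt_atTop 0] with t ht
      exact (middle_term_bounds Dσ kd γ ζ hDσ hkd hγ hζdef ht).1
    · filter_upwards [eventually_gt_atTop 0] with t ht
      exact (middle_term_bounds Dσ kd γ ζ hDσ hkd hγ hζdef ht).2
  have hlim : Tendsto (Hform Dσ kd γ w ζ) atTop
      (𝓝 (w / Real.sqrt (kd * Dσ) * 1 - w * γ / ζ * (0 + γ * Real.sqrt (Dσ / kd) * 1 - 1))) := by
    unfold Hform
    exact ((h1.const_mul _).sub (((h2.add ((tendsto_const_nhds (x := γ * Real.sqrt (Dσ / kd))).mul h1)).sub_const 1).const_mul _))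
  convert hlim using 2
  rw [mul_comm Dσ kd]
  ring

lemma Hform_bound (hDσ : 0 < Dσ) (hkd : 0 < kd) (hγ : 0 < γ)
    (hζdef : ζ = γ ^ 2 * Dσ - kd) {t : ℝ} (ht : 0 < t) :
    |Hform Dσ kd γ w ζ t| ≤ |w| / Real.sqrt (kd * Dσ) +
      |w * γ / ζ| * (2 + γ * Real.sqrt (Dσ / kd)) := by
  obtain ⟨hm0, hm1⟩ := middle_term_bounds Dσ kd γ ζ hDσ hkd hγ hζdef ht
  have harg : (0:ℝ) ≤ Real.sqrt (kd * t) := Real.sqrt_nonneg _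
  have he1 : 0 ≤ erf (Real.sqrt (kd * t)) := erf_nonneg harg
  have he2 : erf (Real.sqrt (kd * t)) ≤ 1 := erf_le_one _
  have hexp : Real.exp (-(kd * t)) ≤ 1 := Real.exp_le_one_iff.2 (by nlinarith)
  unfold Hform
  have hsq : 0 ≤ γ * Real.sqrt (Dσ / kd) := by positivity
  apply (abs_sub _ _).trans
  gcongr
  · rw [abs_mul, abs_div]
    calc |w| / |Real.sqrt (kd * Dσ)| * |erf (Real.sqrt (kd * t))|
        ≤ |w| / |Real.sqrt (kd * Dσ)| * 1 := by
          apply mul_le_mul_of_nonneg_left _ (by positivity)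
          rw [abs_le]; constructor <;> linarith
      _ = |w| / Real.sqrt (kd * Dσ) := by
          rw [mul_one, abs_of_nonneg (Real.sqrt_nonneg _)]
  · rw [abs_mul]
    apply mul_le_mul_of_nonneg_left _ (abs_nonneg _)
    rw [abs_le]
    constructor
    · nlinarith
    · nlinarith

lemma integral_exp_neg_mul_interval {b : ℝ} (hb : 0 < b) (p q : ℝ) :
    ∫ x in p..q, Real.exp (-(b * x)) = (Real.exp (-(b * p)) - Real.exp (-(b * q))) / b := by
  have h : ∀ x ∈ Set.uIcc p q, HasDerivAt (fun y => -Real.exp (-(b * y)) / b)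
      (Real.exp (-(b * x))) x := by
    intro x _
    have h1 : HasDerivAt (fun y : ℝ => -(b * y)) (-b) x := by
      simpa using (hasDerivAt_id x).const_mul (-b)
    have h2 := (Real.hasDerivAt_exp (-(b * x))).comp x h1
    have h3 := (h2.neg).div_const b
    exact h3.congr_deriv (by rw [div_eq_iff hb.ne']; ring)
  rw [intervalIntegral.integral_eq_sub_of_hasDerivAt h]
  · ring
  · apply Continuous.intervalIntegrable
    continuity

lemma integral_exp_neg_mul_Ioi {b : ℝ} (hb : 0 < b) (p : ℝ) :
    ∫ x in Set.Ioi p, Real.exp (-(b * x)) = Real.exp (-(b * p)) / b := by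
  have hint : IntegrableOn (fun x => Real.exp (-(b * x))) (Set.Ioi p) := by
    have := exp_neg_integrableOn_Ioi p hb
    simpa [neg_mul] using this
  have h1 := intervalIntegral_tendsto_integral_Ioi p hint tendsto_id
  have h2 : Tendsto (fun T => ∫ x in p..T, Real.exp (-(b * x))) atTop
      (𝓝 (Real.exp (-(b * p)) / b)) := by
    simp_rw [fun T => integral_exp_neg_mul_interval hb p T]
    have hexp : Tendsto (fun T => Real.exp (-(b * T))) atTop (𝓝 0) :=
      Real.tendsto_exp_atBot.comp (tendsto_neg_atTop_atBot.comp (tendsto_id.const_mul_atTop hb))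
    have := ((tendsto_const_nhds (x := Real.exp (-(b * p)))).sub hexp).div_const b
    simpa using this
  exact tendsto_nhds_unique h1 h2

lemma integrable_tsum_helper {μ : Measure ℝ} {F : ℕ → ℝ → ℝ}
    (hI : ∀ n, Integrable (F n) μ) (hs : Summable fun n => ∫ t, ‖F n t‖ ∂μ)
    (hmeas : AEStronglyMeasurable (fun t => ∑' n, F n t) μ) :
    Integrable (fun t => ∑' n, F n t) μ := by
  refine ⟨hmeas, ?_⟩
  rw [hasFiniteIntegral_iff_norm]
  have step1 : ∫⁻ t, ENNReal.ofReal ‖(∑' n, F n t)‖ ∂μ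
      ≤ ∫⁻ t, (∑' n, (‖F n t‖₊ : ℝ≥0∞)) ∂μ := by
    apply lintegral_mono
    intro t
    simp only []
    show ENNReal.ofReal ‖(∑' n, F n t)‖ ≤ ∑' n, (‖F n t‖₊ : ℝ≥0∞)
    by_cases h : Summable fun n => ‖F n t‖₊
    · have e1 : ENNReal.ofReal ‖(∑' n, F n t)‖ = (‖(∑' n, F n t)‖₊ : ℝ≥0∞) := by
        rw [ENNReal.ofReal, Real.toNNReal_eq_nnnorm_of_nonneg (norm_nonneg _)]
        simp
      have e2 : ((‖(∑' n, F n t)‖₊ : ℝ≥0) : ℝ≥0∞) ≤ ((∑' n, ‖F n t‖₊ : ℝ≥0) : ℝ≥0∞) :=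
        ENNReal.coe_le_coe.2 (nnnorm_tsum_le h)
      rw [e1]
      exact e2.trans (le_of_eq (ENNReal.coe_tsum h))
    · have : (∑' n, (‖F n t‖₊ : ℝ≥0∞)) = ⊤ := by
        by_contra hne
        exact h (ENNReal.tsum_coe_ne_top_iff_summable.1 hne)
      rw [this]; exact le_top
  have step2 : ∫⁻ t, (∑' n, (‖F n t‖₊ : ℝ≥0∞)) ∂μ
      = ∑' n, ∫⁻ t, (‖F n t‖₊ : ℝ≥0∞) ∂μ :=
    lintegral_tsum fun n => (hI n).aestronglyMeasurable.enorm
  have step3 : (∑' n, ∫⁻ t, (‖F n t‖₊ : ℝ≥0∞) ∂μ) < ⊤ := by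
    have heq : ∀ n, ∫⁻ t, (‖F n t‖₊ : ℝ≥0∞) ∂μ = ENNReal.ofReal (∫ t, ‖F n t‖ ∂μ) :=
      fun n => (ofReal_integral_norm_eq_lintegral_enorm (hI n)).symm
    simp_rw [heq]
    rw [← ENNReal.ofReal_tsum_of_nonneg (fun n => integral_nonneg fun t => norm_nonneg _) hs]
    exact ENNReal.ofReal_lt_top
  exact lt_of_le_of_lt step1 (step2 ▸ step3)

section FC
variable {a : ℕ → ℝ} (ha : ∀ n, 0 < a n) {c : ℕ → ℝ} (hsum : Summable fun n => |c n|)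
  {τ : ℝ} (hτ : 0 < τ)

lemma exp_facts {b t : ℝ} (hb : 0 < b) (ht : 0 ≤ t) :
    0 ≤ 1 - Real.exp (-(b * t)) ∧ 1 - Real.exp (-(b * t)) ≤ 1 := by
  have h1 : Real.exp (-(b * t)) ≤ 1 := Real.exp_le_one_iff.2 (by nlinarith)
  have h2 : 0 < Real.exp (-(b * t)) := Real.exp_pos _
  constructor <;> linarith

include ha hsum in
lemma g1sum {t : ℝ} (ht : 0 ≤ t) :
    Summable fun n => c n * (1 - Real.exp (-(a n * t))) := by
  apply Summable.of_norm
  apply hsum.of_nonneg_of_le (fun n => norm_nonneg _)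
  intro n
  obtain ⟨h1, h2⟩ := exp_facts (ha n) ht
  rw [norm_mul, Real.norm_eq_abs, Real.norm_eq_abs, abs_of_nonneg h1]
  calc |c n| * (1 - Real.exp (-(a n * t))) ≤ |c n| * 1 := by
        apply mul_le_mul_of_nonneg_left h2 (abs_nonneg _)
    _ = |c n| := mul_one _

include ha hsum in
lemma g2sum {t : ℝ} (ht : τ ≤ t) (hτ0 : 0 ≤ τ) :
    Summable fun n => c n * (Real.exp (-(a n * (t - τ))) - Real.exp (-(a n * t))) := by
  apply Summable.of_norm
  apply hsum.of_nonneg_of_le (fun n => norm_nonneg _)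
  intro n
  have h0 : Real.exp (-(a n * t)) ≤ Real.exp (-(a n * (t - τ))) := by
    apply Real.exp_le_exp.2; nlinarith [ha n]
  have h1 : Real.exp (-(a n * (t - τ))) ≤ 1 :=
    Real.exp_le_one_iff.2 (by nlinarith [ha n, Real.exp_pos (-(a n * (t - τ)))])
  have h2 : 0 < Real.exp (-(a n * t)) := Real.exp_pos _
  rw [norm_mul, Real.norm_eq_abs, Real.norm_eq_abs,
    abs_of_nonneg (show (0:ℝ) ≤ Real.exp (-(a n * (t - τ))) - Real.exp (-(a n * t)) by linarith)]
  calc |c n| * (Real.exp (-(a n * (t - τ))) - Real.exp (-(a n * t))) ≤ |c n| * 1 := by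
        apply mul_le_mul_of_nonneg_left (by linarith) (abs_nonneg _)
    _ = |c n| := mul_one _

include ha hsum in
lemma meas1 : AEStronglyMeasurable (fun t => ∑' n, c n * (1 - Real.exp (-(a n * t))))
    (volume.restrict (Set.Ioc 0 τ)) := by
  apply aestronglyMeasurable_of_tendsto_ae atTop
    (f := fun N t => ∑ n ∈ Finset.range N, c n * (1 - Real.exp (-(a n * t))))
  · intro N
    apply Continuous.aestronglyMeasurable
    continuity
  · have hmem := ae_restrict_mem (μ := volume) (measurableSet_Ioc (a := (0:ℝ)) (b := τ))
    filter_upwards [hmem] with t ht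
    exact (g1sum ha hsum ht.1.le).hasSum.tendsto_sum_nat

include ha hsum in
lemma meas2 (hτ0 : 0 ≤ τ) : AEStronglyMeasurable
    (fun t => ∑' n, c n * (Real.exp (-(a n * (t - τ))) - Real.exp (-(a n * t))))
    (volume.restrict (Set.Ioi τ)) := by
  apply aestronglyMeasurable_of_tendsto_ae atTop
    (f := fun N t => ∑ n ∈ Finset.range N,
      c n * (Real.exp (-(a n * (t - τ))) - Real.exp (-(a n * t))))
  · intro N
    apply Continuous.aestronglyMeasurable
    continuity
  · have hmem := ae_restrict_mem (μ := volume) (measurableSet_Ioi (a := τ))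
    filter_upwards [hmem] with t ht
    exact (g2sum ha hsum ht.le hτ0).hasSum.tendsto_sum_nat

include ha hτ in
lemma term1_int (k : ℝ) (n : ℕ) :
    ∫ t in Set.Ioc (0:ℝ) τ, k * (1 - Real.exp (-(a n * t)))
      = k * (τ - (1 - Real.exp (-(a n * τ))) / a n) := by
  rw [← intervalIntegral.integral_of_le hτ.le, intervalIntegral.integral_const_mul]
  congr 1
  have hi1 : IntervalIntegrable (fun _ : ℝ => (1:ℝ)) volume 0 τ :=
    intervalIntegrable_const
  have hi2 : IntervalIntegrable (fun t => Real.exp (-(a n * t))) volume 0 τ := by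
    apply Continuous.intervalIntegrable; continuity
  rw [intervalIntegral.integral_sub hi1 hi2, intervalIntegral.integral_const,
    integral_exp_neg_mul_interval (ha n)]
  simp only [mul_zero, neg_zero, Real.exp_zero, smul_eq_mul, mul_one]
  ring

include ha in
lemma term2_int (k : ℝ) (n : ℕ) :
    ∫ t in Set.Ioi τ, k * (Real.exp (-(a n * (t - τ))) - Real.exp (-(a n * t)))
      = k * ((1 - Real.exp (-(a n * τ))) / a n) := by
  rw [integral_const_mul]
  congr 1
  have hrw : ∀ t : ℝ, Real.exp (-(a n * (t - τ)))
      = Real.exp (a n * τ) * Real.exp (-(a n * t)) := by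
    intro t; rw [← Real.exp_add]; congr 1; ring
  have hint : IntegrableOn (fun t => Real.exp (-(a n * t))) (Set.Ioi τ) := by
    have := exp_neg_integrableOn_Ioi τ (ha n)
    simpa [neg_mul] using this
  have hint1 : IntegrableOn (fun t => Real.exp (-(a n * (t - τ)))) (Set.Ioi τ) := by
    simp_rw [hrw]
    exact hint.const_mul _
  rw [integral_sub hint1 hint]
  simp_rw [hrw]
  rw [integral_const_mul, integral_exp_neg_mul_Ioi (ha n)]
  have he : Real.exp (a n * τ) * Real.exp (-(a n * τ)) = 1 := by
    rw [← Real.exp_add]; simp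
  have hane := (ha n).ne'
  field_simp
  linear_combination he


include ha hτ in
lemma E_bounds (n : ℕ) : 0 ≤ (1 - Real.exp (-(a n * τ))) / a n ∧
    (1 - Real.exp (-(a n * τ))) / a n ≤ τ := by
  obtain ⟨h1, h2⟩ := exp_facts (ha n) hτ.le
  have h3 : 1 - Real.exp (-(a n * τ)) ≤ a n * τ := by
    have := Real.add_one_le_exp (-(a n * τ))
    linarith
  constructor
  · exact div_nonneg h1 (ha n).le
  · rw [div_le_iff₀ (ha n)]; linarith

include ha hτ in
lemma term1_integrable (n : ℕ) :
    IntegrableOn (fun t => c n * (1 - Real.exp (-(a n * t)))) (Set.Ioc 0 τ) := by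
  apply Continuous.integrableOn_Ioc
  continuity

include ha in
lemma term2_integrable (n : ℕ) :
    IntegrableOn (fun t => c n * (Real.exp (-(a n * (t - τ))) - Real.exp (-(a n * t))))
      (Set.Ioi τ) := by
  have hint : IntegrableOn (fun t => Real.exp (-(a n * t))) (Set.Ioi τ) := by
    have := exp_neg_integrableOn_Ioi τ (ha n)
    simpa [neg_mul] using this
  have hint1 : IntegrableOn (fun t => Real.exp (-(a n * (t - τ)))) (Set.Ioi τ) := by
    have hrw : ∀ t : ℝ, Real.exp (-(a n * (t - τ)))
        = Real.exp (a n * τ) * Real.exp (-(a n * t)) := by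
      intro t; rw [← Real.exp_add]; congr 1; ring
    simp_rw [hrw]
    exact hint.const_mul _
  exact (hint1.sub hint).const_mul _

include ha hτ in
lemma norm_term1 (n : ℕ) :
    ∫ t in Set.Ioc (0:ℝ) τ, ‖c n * (1 - Real.exp (-(a n * t)))‖ ≤ |c n| * τ := by
  have hle : ∫ t in Set.Ioc (0:ℝ) τ, ‖c n * (1 - Real.exp (-(a n * t)))‖
      ≤ ∫ _t in Set.Ioc (0:ℝ) τ, |c n| := by
    apply setIntegral_mono_on (term1_integrable ha hτ n).norm (integrableOn_const (by
      rw [Real.volume_Ioc]; exact ENNReal.ofReal_ne_top)) measurableSet_Ioc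
    intro t ht
    obtain ⟨h1, h2⟩ := exp_facts (ha n) ht.1.le
    rw [norm_mul, Real.norm_eq_abs, Real.norm_eq_abs, abs_of_nonneg h1]
    calc |c n| * (1 - Real.exp (-(a n * t))) ≤ |c n| * 1 :=
          mul_le_mul_of_nonneg_left h2 (abs_nonneg _)
      _ = |c n| := mul_one _
  calc ∫ t in Set.Ioc (0:ℝ) τ, ‖c n * (1 - Real.exp (-(a n * t)))‖
      ≤ ∫ _t in Set.Ioc (0:ℝ) τ, |c n| := hle
    _ = τ * |c n| := by
        rw [setIntegral_const, Real.volume_real_Ioc_of_le hτ.le, smul_eq_mul, sub_zero]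
    _ = |c n| * τ := mul_comm _ _

include ha hτ in
lemma norm_term2 (n : ℕ) :
    ∫ t in Set.Ioi τ, ‖c n * (Real.exp (-(a n * (t - τ))) - Real.exp (-(a n * t)))‖
      ≤ |c n| * τ := by
  have heq : ∫ t in Set.Ioi τ, ‖c n * (Real.exp (-(a n * (t - τ))) - Real.exp (-(a n * t)))‖
      = ∫ t in Set.Ioi τ, |c n| * (Real.exp (-(a n * (t - τ))) - Real.exp (-(a n * t))) := by
    apply setIntegral_congr_fun measurableSet_Ioi
    intro t ht
    have h0 : Real.exp (-(a n * t)) ≤ Real.exp (-(a n * (t - τ))) := by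
      apply Real.exp_le_exp.2
      have := Set.mem_Ioi.1 ht
      nlinarith [ha n]
    show ‖c n * (Real.exp (-(a n * (t - τ))) - Real.exp (-(a n * t)))‖
      = |c n| * (Real.exp (-(a n * (t - τ))) - Real.exp (-(a n * t)))
    rw [norm_mul, Real.norm_eq_abs, Real.norm_eq_abs,
      abs_of_nonneg (show (0:ℝ) ≤ Real.exp (-(a n * (t - τ))) - Real.exp (-(a n * t)) by
        linarith)]
  rw [heq, term2_int ha |c n| n]
  apply mul_le_mul_of_nonneg_left (E_bounds ha hτ n).2 (abs_nonneg _)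

include ha hsum hτ in
lemma int1 : IntegrableOn (fun t => ∑' n, c n * (1 - Real.exp (-(a n * t))))
    (Set.Ioc 0 τ) := by
  apply integrable_tsum_helper (fun n => term1_integrable ha hτ n)
    _ (meas1 ha hsum)
  apply (hsum.mul_right τ).of_nonneg_of_le
    (fun n => integral_nonneg fun t => norm_nonneg _)
  exact fun n => norm_term1 ha hτ n

include ha hsum hτ in
lemma int2 : IntegrableOn
    (fun t => ∑' n, c n * (Real.exp (-(a n * (t - τ))) - Real.exp (-(a n * t))))
    (Set.Ioi τ) := by
  apply integrable_tsum_helper (fun n => term2_integrable ha n)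
    _ (meas2 ha hsum hτ.le)
  apply (hsum.mul_right τ).of_nonneg_of_le
    (fun n => integral_nonneg fun t => norm_nonneg _)
  exact fun n => norm_term2 ha hτ n

include ha hsum hτ in
lemma val1 : ∫ t in Set.Ioc (0:ℝ) τ, (∑' n, c n * (1 - Real.exp (-(a n * t))))
    = ∑' n, c n * (τ - (1 - Real.exp (-(a n * τ))) / a n) := by
  rw [← integral_tsum_of_summable_integral_norm (fun n => term1_integrable ha hτ n)
    (((hsum.mul_right τ).of_nonneg_of_le
      (fun n => integral_nonneg fun t => norm_nonneg _) (fun n => norm_term1 ha hτ n)))]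
  exact tsum_congr fun n => term1_int ha hτ (c n) n

include ha hsum hτ in
lemma val2 : ∫ t in Set.Ioi τ,
      (∑' n, c n * (Real.exp (-(a n * (t - τ))) - Real.exp (-(a n * t))))
    = ∑' n, c n * ((1 - Real.exp (-(a n * τ))) / a n) := by
  rw [← integral_tsum_of_summable_integral_norm (fun n => term2_integrable ha n)
    (((hsum.mul_right τ).of_nonneg_of_le
      (fun n => integral_nonneg fun t => norm_nonneg _) (fun n => norm_term2 ha hτ n)))]
  exact tsum_congr fun n => term2_int ha (c n) n

end FC
theorem stmt_10
    (rT kf μ Nv Dv : ℝ)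
    (hrT : 0 < rT) (hkf : 0 < kf) (hμ : 0 < μ) (hNv : 0 < Nv) (hDv : 0 < Dv)
    (τ : ℝ) (hτ : τ = Nv / μ)
    (C : ℝ) (hCdef : C = 4 * rT ^ 2 * kf * μ / (Nv * Dv))
    (lam : ℕ → ℝ) (hlam : ∀ n, 0 < lam n)
    (hne : ∀ n, 2 * lam n * rT ≠ Real.sin (2 * lam n * rT))
    (c : ℕ → ℝ)
    (hc : ∀ n, c n = lam n * (Real.sin (lam n * rT) / (lam n * rT)) /
          (2 * lam n * rT - Real.sin (2 * lam n * rT)))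
    (hsum : Summable fun n => |c n|)
    (fc1 : ℝ → ℝ)
    (hfc1 : ∀ t, fc1 t = C * ∑' n, c n * (1 - Real.exp (-(Dv * lam n ^ 2 * t))))
    (fc2 : ℝ → ℝ)
    (hfc2 : ∀ t, fc2 t = C * ∑' n, c n *
          (Real.exp (-(Dv * lam n ^ 2 * (t - τ))) - Real.exp (-(Dv * lam n ^ 2 * t))))
    (Dσ kd γ w : ℝ) (hDσ : 0 < Dσ) (hkd : 0 < kd) (hγ : 0 < γ)
    (ζ : ℝ) (hζdef : ζ = γ ^ 2 * Dσ - kd) (hζ : ζ ≠ 0)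
    (H : ℝ → ℝ)
    (hH : ∀ t, 0 < t → H t = w / Real.sqrt (kd * Dσ) * erf (Real.sqrt (kd * t)) -
          w * γ / ζ * (Real.exp (ζ * t) * erfc (γ * Real.sqrt (Dσ * t)) +
            γ * Real.sqrt (Dσ / kd) * erf (Real.sqrt (kd * t)) - 1))
    (Hinf : ℝ)
    (hHinf : Hinf = w / Real.sqrt (Dσ * kd) - w * γ ^ 2 / ζ * Real.sqrt (Dσ / kd) + w * γ / ζ)
    (hnorm : ∑' n, c n = Dv / (4 * rT ^ 2 * kf))
    (fc : ℝ → ℝ)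
    (hfca : ∀ t, 0 < t → t ≤ τ → fc t = fc1 t)
    (hfcb : ∀ t, τ < t → fc t = fc2 t) :
    Tendsto (fun t => ∫ u in (0:ℝ)..t, fc u * H (t - u)) atTop (𝓝 Hinf) := by
  have hτpos : 0 < τ := by rw [hτ]; positivity
  have ha : ∀ n, 0 < Dv * lam n ^ 2 := fun n => by have := hlam n; positivity
  set Φ : ℝ → ℝ := Hform Dσ kd γ w ζ with hΦdef
  set M : ℝ := |w| / Real.sqrt (kd * Dσ) + |w * γ / ζ| * (2 + γ * Real.sqrt (Dσ / kd)) with hMdef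
  have hΦbound : ∀ s : ℝ, 0 < s → |Φ s| ≤ M := fun s hs =>
    Hform_bound Dσ kd γ w ζ hDσ hkd hγ hζdef hs
  have hM0 : 0 ≤ M := (abs_nonneg _).trans (hΦbound 1 one_pos)
  have hΦtendsto : Tendsto Φ atTop (𝓝 Hinf) := by
    rw [hHinf]; exact Hform_tendsto Dσ kd γ w ζ hDσ hkd hγ hζdef
  have hΦcont : Continuous Φ := Hform_continuous Dσ kd γ w ζ
  have hHeq : ∀ s : ℝ, 0 < s → H s = Φ s := fun s hs => hH s hs
  -- fc integrability pieces
  have hint1 : IntegrableOn fc (Set.Ioc 0 τ) := by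
    apply MeasureTheory.IntegrableOn.congr_fun
      (((int1 (a := fun n => Dv * lam n ^ 2) ha hsum hτpos)).const_mul C) _ measurableSet_Ioc
    intro t ht
    rw [hfca t ht.1 ht.2, hfc1]
  have hint2 : IntegrableOn fc (Set.Ioi τ) := by
    apply MeasureTheory.IntegrableOn.congr_fun
      (((int2 (a := fun n => Dv * lam n ^ 2) ha hsum hτpos)).const_mul C) _ measurableSet_Ioi
    intro t ht
    rw [hfcb t ht, hfc2]
  have hfcint : IntegrableOn fc (Set.Ioi 0) := by
    have := hint1.union hint2
    rwa [Set.Ioc_union_Ioi_eq_Ioi hτpos.le] at this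
  -- total integral = 1
  have hE : ∀ n, 0 ≤ (1 - Real.exp (-(Dv * lam n ^ 2 * τ))) / (Dv * lam n ^ 2) ∧
      (1 - Real.exp (-(Dv * lam n ^ 2 * τ))) / (Dv * lam n ^ 2) ≤ τ := fun n =>
    E_bounds (a := fun n => Dv * lam n ^ 2) ha hτpos n
  have hs1 : Summable fun n =>
      c n * (τ - (1 - Real.exp (-(Dv * lam n ^ 2 * τ))) / (Dv * lam n ^ 2)) := by
    apply Summable.of_norm
    apply (hsum.mul_right τ).of_nonneg_of_le (fun n => norm_nonneg _)
    intro n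
    obtain ⟨h1, h2⟩ := hE n
    rw [norm_mul, Real.norm_eq_abs, Real.norm_eq_abs,
      abs_of_nonneg (show (0:ℝ) ≤ τ - _ by linarith)]
    apply mul_le_mul_of_nonneg_left _ (abs_nonneg _)
    linarith
  have hs2 : Summable fun n =>
      c n * ((1 - Real.exp (-(Dv * lam n ^ 2 * τ))) / (Dv * lam n ^ 2)) := by
    apply Summable.of_norm
    apply (hsum.mul_right τ).of_nonneg_of_le (fun n => norm_nonneg _)
    intro n
    obtain ⟨h1, h2⟩ := hE n
    rw [norm_mul, Real.norm_eq_abs, Real.norm_eq_abs, abs_of_nonneg h1]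
    exact mul_le_mul_of_nonneg_left h2 (abs_nonneg _)
  have hval : ∫ t in Set.Ioi (0:ℝ), fc t = 1 := by
    have e1 : ∫ t in Set.Ioc (0:ℝ) τ, fc t
        = C * ∑' n, c n * (τ - (1 - Real.exp (-(Dv * lam n ^ 2 * τ))) / (Dv * lam n ^ 2)) := by
      rw [setIntegral_congr_fun measurableSet_Ioc
        (show Set.EqOn fc (fun t => C * ∑' n, c n * (1 - Real.exp (-(Dv * lam n ^ 2 * t))))
          (Set.Ioc 0 τ) from fun t ht => by rw [hfca t ht.1 ht.2, hfc1]),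
        integral_const_mul]
      congr 1
      exact val1 (a := fun n => Dv * lam n ^ 2) ha hsum hτpos
    have e2 : ∫ t in Set.Ioi τ, fc t
        = C * ∑' n, c n * ((1 - Real.exp (-(Dv * lam n ^ 2 * τ))) / (Dv * lam n ^ 2)) := by
      rw [setIntegral_congr_fun measurableSet_Ioi
        (show Set.EqOn fc (fun t => C * ∑' n, c n *
            (Real.exp (-(Dv * lam n ^ 2 * (t - τ))) - Real.exp (-(Dv * lam n ^ 2 * t))))
          (Set.Ioi τ) from fun t ht => by rw [hfcb t ht, hfc2]),
        integral_const_mul]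
      congr 1
      exact val2 (a := fun n => Dv * lam n ^ 2) ha hsum hτpos
    have hsplit : ∫ t in Set.Ioi (0:ℝ), fc t
        = (∫ t in Set.Ioc (0:ℝ) τ, fc t) + ∫ t in Set.Ioi τ, fc t := by
      rw [← setIntegral_union (Set.Ioc_disjoint_Ioi le_rfl) measurableSet_Ioi hint1 hint2,
        Set.Ioc_union_Ioi_eq_Ioi hτpos.le]
    rw [hsplit, e1, e2, ← mul_add, ← Summable.tsum_add hs1 hs2]
    have : ∀ n : ℕ, c n * (τ - (1 - Real.exp (-(Dv * lam n ^ 2 * τ))) / (Dv * lam n ^ 2))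
        + c n * ((1 - Real.exp (-(Dv * lam n ^ 2 * τ))) / (Dv * lam n ^ 2)) = c n * τ := by
      intro n; ring
    rw [tsum_congr this, tsum_mul_right, hnorm, hCdef, hτ]
    field_simp
  -- measurability of fc on Ioi 0
  have hfcmeas : AEStronglyMeasurable fc (volume.restrict (Set.Ioi 0)) := by
    rw [← Set.Ioc_union_Ioi_eq_Ioi hτpos.le,
      Measure.restrict_union (Set.Ioc_disjoint_Ioi le_rfl) measurableSet_Ioi]
    exact aestronglyMeasurable_add_measure_iff.2
      ⟨hint1.aestronglyMeasurable, hint2.aestronglyMeasurable⟩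
  -- dominated convergence
  have hmain : Tendsto (fun t => ∫ u, Set.indicator (Set.Ioo 0 t)
      (fun u => fc u * Φ (t - u)) u) atTop
      (𝓝 (∫ u, Set.indicator (Set.Ioi 0) (fun u => fc u * Hinf) u)) := by
    apply tendsto_integral_filter_of_dominated_convergence
      (Set.indicator (Set.Ioi 0) (fun u => M * |fc u|))
    · filter_upwards with t
      apply (aestronglyMeasurable_indicator_iff measurableSet_Ioo).2
      apply AEStronglyMeasurable.mul
      · exact hfcmeas.mono_measure (Measure.restrict_mono Set.Ioo_subset_Ioi_self le_rfl)
      · exact ((hΦcont.comp (continuous_const.sub continuous_id)).aestronglyMeasurable).restrict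
    · filter_upwards with t
      filter_upwards with u
      by_cases hu : u ∈ Set.Ioo 0 t
      · rw [Set.indicator_of_mem hu, Set.indicator_of_mem (Set.mem_Ioi.2 hu.1)]
        rw [Real.norm_eq_abs, abs_mul]
        calc |fc u| * |Φ (t - u)| ≤ |fc u| * M :=
              mul_le_mul_of_nonneg_left (hΦbound (t - u) (by linarith [hu.2])) (abs_nonneg _)
          _ = M * |fc u| := mul_comm _ _
      · rw [Set.indicator_of_notMem hu, norm_zero]
        exact Set.indicator_nonneg (fun u _ => by positivity) u
    · rw [integrable_indicator_iff measurableSet_Ioi]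
      exact (hfcint.abs.const_mul M)
    · filter_upwards with u
      by_cases hu : 0 < u
      · rw [Set.indicator_of_mem (Set.mem_Ioi.2 hu)]
        have hlim : Tendsto (fun t => fc u * Φ (t - u)) atTop (𝓝 (fc u * Hinf)) := by
          apply Tendsto.const_mul
          apply hΦtendsto.comp
          have := tendsto_atTop_add_const_right atTop (-u) (tendsto_id (α := ℝ))
          simpa [sub_eq_add_neg] using this
        apply hlim.congr'
        filter_upwards [eventually_gt_atTop u] with t ht
        rw [Set.indicator_of_mem (Set.mem_Ioo.2 ⟨hu, ht⟩)]
      · rw [Set.indicator_of_notMem (by simpa using hu)]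
        apply (tendsto_const_nhds (x := (0:ℝ))).congr'
        filter_upwards with t
        rw [Set.indicator_of_notMem (fun h => hu h.1)]
  have hlimval : ∫ u, Set.indicator (Set.Ioi (0:ℝ)) (fun u => fc u * Hinf) u = Hinf := by
    rw [integral_indicator measurableSet_Ioi, integral_mul_const, hval, one_mul]
  rw [hlimval] at hmain
  apply Filter.Tendsto.congr' _ hmain
  filter_upwards [eventually_gt_atTop 0] with t ht
  rw [integral_indicator measurableSet_Ioo,
    intervalIntegral.integral_of_le ht.le, integral_Ioc_eq_integral_Ioo]
  apply setIntegral_congr_fun measurableSet_Ioo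
  intro u hu
  show fc u * Φ (t - u) = fc u * H (t - u)
  rw [hHeq (t - u) (by linarith [hu.2])]
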